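/- Partition lemma (PassJoin): let x, y be strings and U a natural number with LD(x,y) ≤ U. Then for any partition of y into U+1 contiguous segments (i.e., y is the concatenation of U+1 strings), at least one segment appears as a contiguous substring of x. -/

import Mathlib

/-! Levenshtein distance was removed from Mathlib; reproduced here from the
older Mathlib `Mathlib/Data/List/EditDistance/Defs.lean`. -/

section LevenshteinCompat

structure Levenshtein.Cost (α β δ : Type*) where
  delete : α → δ
  insert : β → δ
  substitute : α → β → δ

def Levenshtein.defaultCost {α : Type*} [DecidableEq α] : Levenshtein.Cost α α ℕ where
  delete _ := 1
  insert _ := 1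
  substitute a b := if a = b then 0 else 1

def Levenshtein.impl {α β δ : Type*} [AddZeroClass δ] [Min δ] (C : Levenshtein.Cost α β δ)
    (xs : List α) (y : β) (d : {r : List δ // 0 < r.length}) : {r : List δ // 0 < r.length} :=
  let ⟨ds, w⟩ := d
  xs.zip (ds.zip ds.tail) |>.foldr
    (init := ⟨[C.insert y + ds.getLast (List.length_pos_iff.mp w)], by simp⟩)
    (fun ⟨x, d₀, d₁⟩ ⟨r, w⟩ =>
      ⟨min (C.delete x + r[0]) (min (C.insert y + d₀) (C.substitute x y + d₁)) :: r, by simp⟩)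

def suffixLevenshtein {α β δ : Type*} [AddZeroClass δ] [Min δ] (C : Levenshtein.Cost α β δ)
    (xs : List α) (ys : List β) : {r : List δ // 0 < r.length} :=
  ys.foldr
    (Levenshtein.impl C xs)
    (xs.foldr (init := ⟨[0], by simp⟩) (fun a ⟨r, w⟩ => ⟨(C.delete a + r[0]) :: r, by simp⟩))

def levenshtein {α β δ : Type*} [AddZeroClass δ] [Min δ] (C : Levenshtein.Cost α β δ)
    (xs : List α) (ys : List β) : δ :=
  let ⟨r, w⟩ := suffixLevenshtein C xs ys
  r[0]

end LevenshteinCompat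

theorem lvc_head_eq {δ : Type*} {l : List δ} {p : 0 < l.length} {a : δ} {b : List δ}
    (h : l = a :: b) : l[0]'p = a := by
  subst h; rfl

theorem lvc_list_head {δ : Type*} {l : List δ} (p : 0 < l.length) {a : δ} {b : List δ}
    (h : l = a :: b) : l = l[0]'p :: b := by
  subst h; rfl

theorem lvc_getLast_eq {δ : Type*} {l : List δ} {p : l ≠ []} {a : δ}
    (h : l = [a]) : l.getLast p = a := by
  subst h; rfl

theorem lvc_impl_cons {α β δ : Type*} [AddZeroClass δ] [Min δ] (C : Levenshtein.Cost α β δ)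
    (x : α) (xs : List α) (y : β) (s t : {r : List δ // 0 < r.length})
    (h : ∃ d, s.1 = d :: t.1) :
    (Levenshtein.impl C (x :: xs) y s).1 =
      min (C.delete x + (Levenshtein.impl C xs y t).1[0]'(Levenshtein.impl C xs y t).2)
        (min (C.insert y + s.1[0]'s.2) (C.substitute x y + t.1[0]'t.2)) ::
        (Levenshtein.impl C xs y t).1 := by
  obtain ⟨d, h⟩ := h
  obtain ⟨s1, hs⟩ := s
  obtain ⟨t1, ht⟩ := t
  simp only at h
  subst h
  cases t1 with
  | nil => simp at ht
  | cons d' ds => rfl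

theorem lvc_suffix_cons {α β δ : Type*} [AddZeroClass δ] [Min δ] (C : Levenshtein.Cost α β δ)
    (x : α) (xs : List α) (ys : List β) :
    (suffixLevenshtein C (x :: xs) ys).1 =
      levenshtein C (x :: xs) ys :: (suffixLevenshtein C xs ys).1 := by
  induction ys with
  | nil => rfl
  | cons y ys ih =>
    exact lvc_list_head _ (lvc_impl_cons C x xs y (suffixLevenshtein C (x :: xs) ys)
      (suffixLevenshtein C xs ys) ⟨_, ih⟩)

theorem lvc_suffix_nil {α β δ : Type*} [AddZeroClass δ] [Min δ] (C : Levenshtein.Cost α β δ)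
    (ys : List β) :
    (suffixLevenshtein C ([] : List α) ys).1 = [levenshtein C ([] : List α) ys] := by
  induction ys with
  | nil => rfl
  | cons y ys ih =>
    exact lvc_list_head (a := C.insert y + _) _ rfl

@[simp] theorem levenshtein_nil_nil {α β δ : Type*} [AddZeroClass δ] [Min δ]
    (C : Levenshtein.Cost α β δ) : levenshtein C ([] : List α) ([] : List β) = 0 := rfl

@[simp] theorem levenshtein_nil_cons {α β δ : Type*} [AddZeroClass δ] [Min δ]
    (C : Levenshtein.Cost α β δ) (y : β) (ys : List β) :
    levenshtein C ([] : List α) (y :: ys) = C.insert y + levenshtein C ([] : List α) ys := by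
  exact (lvc_head_eq (l := (Levenshtein.impl C [] y (suffixLevenshtein C [] ys)).1) (b := []) rfl).trans
    (congrArg (C.insert y + ·) (lvc_getLast_eq (lvc_suffix_nil C ys)))

@[simp] theorem levenshtein_cons_nil {α β δ : Type*} [AddZeroClass δ] [Min δ]
    (C : Levenshtein.Cost α β δ) (x : α) (xs : List α) :
    levenshtein C (x :: xs) ([] : List β) = C.delete x + levenshtein C xs ([] : List β) := rfl

@[simp] theorem levenshtein_cons_cons {α β δ : Type*} [AddZeroClass δ] [Min δ]
    (C : Levenshtein.Cost α β δ) (x : α) (xs : List α) (y : β) (ys : List β) :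
    levenshtein C (x :: xs) (y :: ys) =
      min (C.delete x + levenshtein C xs (y :: ys))
        (min (C.insert y + levenshtein C (x :: xs) ys)
          (C.substitute x y + levenshtein C xs ys)) :=
  lvc_head_eq (lvc_impl_cons C x xs y (suffixLevenshtein C (x :: xs) ys)
    (suffixLevenshtein C xs ys) ⟨_, lvc_suffix_cons C x xs ys⟩)

variable {α : Type*} [Fintype α] [DecidableEq α]

/-- Levenshtein distance: the minimum number of single-character insertions,
deletions, and substitutions transforming one string into another. -/
def LD (x y : List α) : ℕ := levenshtein Levenshtein.defaultCost x y

/-- Normalized Levenshtein distance. -/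
noncomputable def NLD (x y : List α) : ℝ :=
  2 * LD x y / (x.length + y.length + LD x y)

lemma LD_nil_left (y : List α) : LD ([] : List α) y = y.length := by
  induction y with
  | nil => simp [LD]
  | cons b ys ih =>
    simp [LD, Levenshtein.defaultCost] at ih ⊢
    omega

lemma LD_eq_zero {x y : List α} (h : LD x y = 0) : x = y := by
  induction x generalizing y with
  | nil =>
    rw [LD_nil_left] at h
    exact (List.eq_nil_of_length_eq_zero h).symm
  | cons a xs ih =>
    cases y with
    | nil => simp [LD, Levenshtein.defaultCost] at h
    | cons b ys =>
      simp only [LD, levenshtein_cons_cons] at h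
      have hd : (Levenshtein.defaultCost.delete a : ℕ) = 1 := rfl
      have hi : (Levenshtein.defaultCost.insert b : ℕ) = 1 := rfl
      have hs : (Levenshtein.defaultCost.substitute a b : ℕ)
          = if a = b then 0 else 1 := rfl
      rw [hd, hi, hs] at h
      by_cases hab : a = b
      · simp [hab] at h
        have h0 : LD xs ys = 0 := by
          simp only [LD]; omega
        rw [hab, ih h0]
      · simp [hab] at h

lemma LD_le_insert (x : List α) (b : α) (ys : List α) :
    LD x (b :: ys) ≤ 1 + LD x ys := by
  cases x with
  | nil => simp [LD_nil_left]
  | cons a xs =>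
    simp only [LD, levenshtein_cons_cons]
    have hi : (Levenshtein.defaultCost.insert b : ℕ) = 1 := rfl
    omega

lemma LD_le_delete (a : α) (xs y : List α) :
    LD (a :: xs) y ≤ 1 + LD xs y := by
  cases y with
  | nil =>
    simp only [LD, levenshtein_cons_nil]
    have : (Levenshtein.defaultCost.delete a : ℕ) = 1 := rfl
    omega
  | cons b ys =>
    simp only [LD, levenshtein_cons_cons]
    have : (Levenshtein.defaultCost.delete a : ℕ) = 1 := rfl
    omega

lemma LD_le_subst (a b : α) (xs ys : List α) :
    LD (a :: xs) (b :: ys) ≤ 1 + LD xs ys := by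
  simp only [LD, levenshtein_cons_cons]
  have hs : (Levenshtein.defaultCost.substitute a b : ℕ)
      = if a = b then 0 else 1 := rfl
  rw [hs]
  by_cases hab : a = b
  · simp [hab]
  · simp [hab]

lemma LD_cons_cons_eq_subst (a b : α) (xs ys : List α) (hab : a = b) :
    LD (a :: xs) (b :: ys) ≤ LD xs ys := by
  simp only [LD, levenshtein_cons_cons]
  have hs : (Levenshtein.defaultCost.substitute a b : ℕ)
      = if a = b then 0 else 1 := rfl
  rw [hs]; simp [hab]

lemma LD_split_aux : ∀ (n : ℕ) (x y1 y2 : List α), x.length + y1.length ≤ n →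
    ∃ x1 x2, x = x1 ++ x2 ∧ LD x1 y1 + LD x2 y2 ≤ LD x (y1 ++ y2) := by
  intro n
  induction n with
  | zero =>
    intro x y1 y2 hn
    have hx : x = [] := List.eq_nil_of_length_eq_zero (by omega)
    have hy : y1 = [] := List.eq_nil_of_length_eq_zero (by omega)
    subst hx; subst hy
    exact ⟨[], [], rfl, by simp [LD]⟩
  | succ n IH =>
  intro x y1 y2 hn
  cases y1 with
  | nil =>
    refine ⟨[], x, rfl, ?_⟩
    simp [LD]
  | cons b y1' =>
    cases x with
    | nil =>
      refine ⟨[], [], rfl, ?_⟩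
      simp only [LD_nil_left, List.nil_append]
      simp only [List.length_append, List.length_cons]
      omega
    | cons a x' =>
      have key : LD (a :: x') ((b :: y1') ++ y2) =
          min (1 + LD x' ((b :: y1') ++ y2))
            (min (1 + LD (a :: x') (y1' ++ y2))
              ((if a = b then 0 else 1) + LD x' (y1' ++ y2))) := by
        simp only [LD, List.cons_append, levenshtein_cons_cons]
        rfl
      rcases Nat.lt_trichotomy 0 1 with _ | _ | _
      all_goals {
        have h3 : (1 + LD x' ((b :: y1') ++ y2) = LD (a :: x') ((b :: y1') ++ y2))
            ∨ (1 + LD (a :: x') (y1' ++ y2) = LD (a :: x') ((b :: y1') ++ y2))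
            ∨ ((if a = b then 0 else 1) + LD x' (y1' ++ y2)
                = LD (a :: x') ((b :: y1') ++ y2)) := by omega
        clear key
        rcases h3 with hc | hc | hc
        · -- delete a
          obtain ⟨x1, x2, hx, hle⟩ :=
            IH x' (b :: y1') y2 (by simp at hn ⊢; omega)
          refine ⟨a :: x1, x2, by simp [hx], ?_⟩
          have := LD_le_delete a x1 (b :: y1')
          omega
        · -- insert b
          obtain ⟨x1, x2, hx, hle⟩ :=
            IH (a :: x') y1' y2 (by simp at hn ⊢; omega)
          refine ⟨x1, x2, hx, ?_⟩
          have := LD_le_insert x1 b y1'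
          omega
        · -- substitute
          obtain ⟨x1, x2, hx, hle⟩ :=
            IH x' y1' y2 (by simp at hn ⊢; omega)
          refine ⟨a :: x1, x2, by simp [hx], ?_⟩
          simp only [List.cons_append] at hc ⊢
          by_cases hab : a = b
          · have := LD_cons_cons_eq_subst a b x1 y1' hab
            rw [if_pos hab] at hc
            omega
          · have := LD_le_subst a b x1 y1'
            rw [if_neg hab] at hc
            omega
      }

lemma partition_aux : ∀ (segs : List (List α)) (x : List α),
    LD x segs.flatten < segs.length → ∃ s ∈ segs, s <:+: x := by
  intro segs
  induction segs with
  | nil => intro x h; simp at h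
  | cons s rest ih =>
    intro x h
    obtain ⟨x1, x2, hx, hle⟩ := LD_split_aux (x.length + s.length) x s rest.flatten le_rfl
    simp only [List.flatten_cons] at h
    by_cases h0 : LD x1 s = 0
    · refine ⟨s, by simp, ?_⟩
      rw [← LD_eq_zero h0, hx]
      exact ⟨[], x2, by simp⟩
    · have : LD x2 rest.flatten < rest.length := by
        simp at h; omega
      obtain ⟨s', hs', hinf⟩ := ih x2 this
      exact ⟨s', by simp [hs'], hinf.trans (hx ▸ (List.suffix_append x1 x2).isInfix)⟩

theorem partition_lemma (x y : List α) (U : ℕ) (h : LD x y ≤ U)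
    (segs : List (List α)) (hlen : segs.length = U + 1) (hjoin : segs.flatten = y) :
    ∃ s ∈ segs, s <:+: x := by 
  subst hjoin
  exact partition_aux segs x (by omega)
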